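/- arXiv:2105.04738 — 2 statements merged into one kernel-verified Lean document; each statement's English description precedes it below -/
import Mathlib

section
/- Let σ_f > 0 and for each j = 1,…,n let 0 < κⱼ ≤ σ_f² and σ_e^{[j]} > 0 with σ_e^{min} = minⱼ σ_e^{[j]} and σ_e^{max} = maxⱼ σ_e^{[j]}. Define the aggregated variance s by s⁻¹ = (1/n)·∑ⱼ (σ_f² − κⱼ²/(σ_f² + (σ_e^{[j]})²))⁻¹. Then σ_f²·(σ_e^{min})²/(σ_f² + (σ_e^{min})²) ≤ s ≤ σ_f² − ((1/n)·∑ⱼ κⱼ²)/(σ_f² + (σ_e^{max})²). -/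
theorem aggregated_variance_bounds (n : ℕ) (hn : 1 ≤ n) (σf : ℝ) (hσf : 0 < σf)
    (κ σe : Fin n → ℝ)
    (hκ : ∀ j, 0 < κ j) (hκ' : ∀ j, κ j ≤ σf ^ 2) (hσe : ∀ j, 0 < σe j)
    (σemin σemax : ℝ)
    (hminle : ∀ j, σemin ≤ σe j) (hminmem : ∃ j, σemin = σe j)
    (hmaxle : ∀ j, σe j ≤ σemax) (hmaxmem : ∃ j, σemax = σe j)
    (s : ℝ)
    (hs : s⁻¹ = (1 / (n : ℝ)) * ∑ j, (σf ^ 2 - κ j ^ 2 / (σf ^ 2 + σe j ^ 2))⁻¹) :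
    σf ^ 2 * σemin ^ 2 / (σf ^ 2 + σemin ^ 2) ≤ s ∧
      s ≤ σf ^ 2 - ((1 / (n : ℝ)) * ∑ j, κ j ^ 2) / (σf ^ 2 + σemax ^ 2) := by
  set A := σf ^ 2 with hA
  have hA0 : 0 < A := by positivity
  set v : Fin n → ℝ := fun j => A - κ j ^ 2 / (A + σe j ^ 2) with hv
  have hn0 : (0 : ℝ) < (n : ℝ) := by exact_mod_cast hn
  obtain ⟨j0, hj0⟩ := hminmem
  have hmin0 : 0 < σemin := hj0 ▸ hσe j0
  obtain ⟨j1, hj1⟩ := hmaxmem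
  have hmax0 : 0 < σemax := hj1 ▸ hσe j1
  set L := A * σemin ^ 2 / (A + σemin ^ 2) with hL
  have hL0 : 0 < L := by positivity
  have hvL : ∀ j, L ≤ v j := by
    intro j
    have h2 : σemin ^ 2 ≤ σe j ^ 2 := by nlinarith [hminle j, hσe j]
    have h1 : L ≤ A * σe j ^ 2 / (A + σe j ^ 2) := by
      rw [hL, div_le_div_iff₀ (by positivity) (by positivity)]
      nlinarith [mul_le_mul_of_nonneg_left h2 (le_of_lt (mul_pos hA0 hA0))]
    have hκ2 : κ j ^ 2 ≤ A ^ 2 := by nlinarith [hκ j, hκ' j]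
    have hd : (0:ℝ) < A + σe j ^ 2 := by positivity
    have h3 : A * σe j ^ 2 / (A + σe j ^ 2) ≤ v j := by
      have hveq : v j = (A * (A + σe j ^ 2) - κ j ^ 2) / (A + σe j ^ 2) := by
        rw [hv]; field_simp
      rw [hveq, div_le_div_iff₀ hd hd]
      nlinarith [mul_nonneg (sub_nonneg.2 hκ2) hd.le]
    exact le_trans h1 h3
  have hv0 : ∀ j, 0 < v j := fun j => lt_of_lt_of_le hL0 (hvL j)
  have hsum_inv_pos : 0 < ∑ j, (v j)⁻¹ := by
    apply Finset.sum_pos (fun j _ => inv_pos.mpr (hv0 j))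
    exact Finset.univ_nonempty_iff.mpr (Fin.pos_iff_nonempty.mp hn)
  have hsinv : s⁻¹ = (1 / (n : ℝ)) * ∑ j, (v j)⁻¹ := hs
  have hsinv_pos : 0 < s⁻¹ := by rw [hsinv]; positivity
  have hs0 : 0 < s := inv_pos.mp hsinv_pos
  constructor
  · -- lower bound
    have h4 : s⁻¹ ≤ L⁻¹ := by
      rw [hsinv]
      have hle : ∑ j, (v j)⁻¹ ≤ ∑ _j : Fin n, L⁻¹ :=
        Finset.sum_le_sum fun j _ => (inv_le_inv₀ (hv0 j) hL0).mpr (hvL j)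
      rw [Finset.sum_const, Finset.card_univ, Fintype.card_fin, nsmul_eq_mul] at hle
      calc (1 / (n:ℝ)) * ∑ j, (v j)⁻¹ ≤ (1 / (n:ℝ)) * ((n:ℝ) * L⁻¹) :=
            mul_le_mul_of_nonneg_left hle (by positivity)
        _ = L⁻¹ := by field_simp
    exact (inv_le_inv₀ hs0 hL0).mp h4
  · -- upper bound
    have hcauchy : ((n:ℝ)) ^ 2 ≤ (∑ j, v j) * (∑ j, (v j)⁻¹) := by
      have key := Finset.sum_mul_sq_le_sq_mul_sq Finset.univ
        (fun j => Real.sqrt (v j)) (fun j => (Real.sqrt (v j))⁻¹)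
      have e1 : ∀ j : Fin n, Real.sqrt (v j) * (Real.sqrt (v j))⁻¹ = 1 :=
        fun j => mul_inv_cancel₀ (ne_of_gt (Real.sqrt_pos.mpr (hv0 j)))
      have e2 : ∀ j : Fin n, Real.sqrt (v j) ^ 2 = v j := fun j => Real.sq_sqrt (hv0 j).le
      have e3 : ∀ j : Fin n, ((Real.sqrt (v j))⁻¹) ^ 2 = (v j)⁻¹ := by
        intro j; rw [inv_pow, e2 j]
      simp_rw [e1, e2, e3, Finset.sum_const, Finset.card_univ, Fintype.card_fin,
        nsmul_eq_mul, mul_one] at key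
      simpa using key
    have hAM : s ≤ (1 / (n:ℝ)) * ∑ j, v j := by
      have h1 : 1 ≤ s⁻¹ * ((1 / (n:ℝ)) * ∑ j, v j) := by
        rw [hsinv]
        calc (1:ℝ) = (n:ℝ)^2 / (n:ℝ)^2 := by field_simp
          _ ≤ ((∑ j, v j) * (∑ j, (v j)⁻¹)) / (n:ℝ)^2 := by gcongr
          _ = (1 / (n:ℝ) * ∑ j, (v j)⁻¹) * (1 / (n:ℝ) * ∑ j, v j) := by
              field_simp
      calc s = s * 1 := by ring
        _ ≤ s * (s⁻¹ * ((1 / (n:ℝ)) * ∑ j, v j)) :=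
            mul_le_mul_of_nonneg_left h1 (le_of_lt hs0)
        _ = (1 / (n:ℝ)) * ∑ j, v j := by field_simp
    have hvub : ∀ j, v j ≤ A - κ j ^ 2 / (A + σemax ^ 2) := by
      intro j
      have h2 : σe j ^ 2 ≤ σemax ^ 2 := by nlinarith [hmaxle j, hσe j]
      have hd2 : κ j ^ 2 / (A + σemax ^ 2) ≤ κ j ^ 2 / (A + σe j ^ 2) := by
        apply div_le_div_of_nonneg_left (by positivity) (by positivity) (by linarith)
      rw [hv]; dsimp only; linarith
    have hsum : (1 / (n:ℝ)) * ∑ j, v j ≤ A - ((1 / (n:ℝ)) * ∑ j, κ j ^ 2) / (A + σemax ^ 2) := by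
      have h5 : ∑ j, v j ≤ ∑ j, (A - κ j ^ 2 / (A + σemax ^ 2)) :=
        Finset.sum_le_sum fun j _ => hvub j
      have h6 : ∑ j, (A - κ j ^ 2 / (A + σemax ^ 2))
          = (n:ℝ) * A - (∑ j, κ j ^ 2) / (A + σemax ^ 2) := by
        rw [Finset.sum_sub_distrib, ← Finset.sum_div, Finset.sum_const, Finset.card_univ,
          Fintype.card_fin, nsmul_eq_mul]
      rw [h6] at h5
      calc (1 / (n:ℝ)) * ∑ j, v j
          ≤ (1 / (n:ℝ)) * ((n:ℝ) * A - (∑ j, κ j ^ 2) / (A + σemax ^ 2)) :=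
            mul_le_mul_of_nonneg_left h5 (by positivity)
        _ = A - ((1 / (n:ℝ)) * ∑ j, κ j ^ 2) / (A + σemax ^ 2) := by
            field_simp
    linarith
end

section
/- Let σ_f > 0, x₁,…,xₙ > 0, and f₂(x) = σ_f²·x/(σ_f² + x). If xᵢ > (1/n)·∑ⱼ xⱼ for some index i, then (f₂(xᵢ))⁻¹ < (1/n)·∑ⱼ (f₂(xⱼ))⁻¹, i.e., f₂(xᵢ) exceeds the harmonic-type aggregate ((1/n)·∑ⱼ f₂(xⱼ)⁻¹)⁻¹. -/
theorem above_average_inv_strict (σf : ℝ) (hσf : 0 < σf) (n : ℕ) (hn : 1 ≤ n)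
    (x : Fin n → ℝ) (hx : ∀ j, 0 < x j)
    (i : Fin n) (hi : (1 / (n : ℝ)) * ∑ j, x j < x i) :
    (σf ^ 2 * x i / (σf ^ 2 + x i))⁻¹ <
      (1 / (n : ℝ)) * ∑ j, (σf ^ 2 * x j / (σf ^ 2 + x j))⁻¹ := by
  have hσ2 : (0:ℝ) < σf ^ 2 := by positivity
  have hn' : (0:ℝ) < n := by exact_mod_cast hn
  have key : ∀ j, (σf ^ 2 * x j / (σf ^ 2 + x j))⁻¹ = (x j)⁻¹ + (σf ^ 2)⁻¹ := by
    intro j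
    have h1 := hx j
    rw [div_eq_mul_inv, mul_inv, mul_inv]
    field_simp
  simp_rw [key, Finset.sum_add_distrib, Finset.sum_const, Finset.card_univ,
    Fintype.card_fin, nsmul_eq_mul, mul_add, one_div, inv_mul_cancel_left₀ hn'.ne']
  have hS : (0:ℝ) < ∑ j, x j := Finset.sum_pos (fun j _ => hx j) (Finset.univ_nonempty_iff.mpr ⟨⟨0, hn⟩⟩)
  have h1 : (x i)⁻¹ < (n:ℝ) / ∑ j, x j := by
    have hmean : (0:ℝ) < (∑ j, x j) / n := by positivity
    have : ((∑ j, x j) / n)⁻¹ = (n:ℝ) / ∑ j, x j := by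
      rw [inv_div]
    rw [← this]
    apply inv_strictAntiOn (by simpa using hmean) (by simpa using hx i)
    rw [div_eq_mul_inv, mul_comm]
    simpa [one_div] using hi
  have h2 : (n:ℝ) / ∑ j, x j ≤ (n:ℝ)⁻¹ * ∑ j, (x j)⁻¹ := by
    have cs : ((n:ℝ)) ^ 2 ≤ (∑ j, (x j)⁻¹) * ∑ j, x j := by
      have := Finset.sum_sq_le_sum_mul_sum_of_sq_eq_mul (Finset.univ : Finset (Fin n))
        (r := fun _ => (1:ℝ)) (f := fun j => (x j)⁻¹) (g := fun j => x j)
        (fun j _ => (inv_pos.mpr (hx j)).le) (fun j _ => (hx j).le)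
        (fun j _ => by rw [one_pow, inv_mul_cancel₀ (hx j).ne'])
      simpa [Finset.card_univ] using this
    rw [div_le_iff₀ hS]
    calc (n:ℝ) = (n:ℝ)⁻¹ * (n:ℝ)^2 := by field_simp
      _ ≤ (n:ℝ)⁻¹ * ((∑ j, (x j)⁻¹) * ∑ j, x j) := by gcongr
      _ = ((n:ℝ)⁻¹ * ∑ j, (x j)⁻¹) * ∑ j, x j := by ring
  linarith
end
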